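/- (Common hyperbolic times) Let $\mu$ be ergodic with $\chi(\mu)>0$ and $H$ full-measure invariant with $\chi_+\equiv\chi(\mu)$ on $H$, let $d_0>0$ be a lower bound for the density of hyperbolic times of points of $H$ with exponent $\chi(\mu)-\varepsilon$, fix $0<d_1<d_0$ and $N_1\in\mathbb N$, and let $j\in\mathbb N$ satisfy $jd_1>N_1-1+d_1$. Then for any $\xi$ and any $j$ points $x_1,\dots,x_j\in H_\xi$, there exist $N_1$ of these points which share infinitely many (arbitrarily large) common hyperbolic times. -/

import Mathlib

open Set Filter MeasureTheory Topology

noncomputable section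

/-- The base space `Σ_N = {1,…,N}^ℤ`. -/
abbrev BSeq (N : ℕ) := ℤ → Fin N

/-- The shift map on bilateral sequences. -/
def shiftSeq {α : Type*} (ξ : ℤ → α) : ℤ → α := fun n => ξ (n + 1)

/-- The unit interval. -/
def I01 : Set ℝ := Set.Icc 0 1

/-- Forward composition of fiber maps: `fw h ξ n = h (ξ (n-1)) ∘ ⋯ ∘ h (ξ 0)`. -/
def fw {α : Type*} (h : α → ℝ → ℝ) (ξ : ℤ → α) : ℕ → ℝ → ℝ
  | 0 => id
  | n + 1 => fun p => h (ξ (n : ℤ)) (fw h ξ n p)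

/-- The step skew-product `F(ξ,p) = (σξ, f_{ξ₀}(p))`. -/
def Fmap {N : ℕ} (f : Fin N → ℝ → ℝ) (z : BSeq N × ℝ) : BSeq N × ℝ :=
  (shiftSeq z.1, f (z.1 0) z.2)


/-- `n` is a hyperbolic time for `(ξ,p)` with exponent `ρ`. -/
def hypTime {N : ℕ} (f : Fin N → ℝ → ℝ) (ξ : BSeq N) (p : ℝ) (ρ : ℝ) (n : ℕ) : Prop :=
  ∀ m : ℕ, m ≤ n →
    Real.exp (((n - m + 1 : ℕ) : ℝ) * ρ) ≤
      |deriv (fw f (fun j => ξ (j + (m : ℤ))) (n - m + 1)) (fw f ξ m p)|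

/-- **Common hyperbolic times.** Among any `j` points in a fiber of `H`, if `j d₁ > N₁-1+d₁`,
some `N₁` of them share infinitely many common hyperbolic times. -/
theorem common_hyperbolic_times
    {N : ℕ} (f : Fin N → ℝ → ℝ)
    (hC1 : ∀ i, ContDiffOn ℝ 1 (f i) I01)
    (hinj : ∀ i, Set.InjOn (f i) I01)
    (hmap : ∀ i, Set.MapsTo (f i) I01 I01)
    (hder : ∀ i, ∀ p ∈ I01, deriv (f i) p ≠ 0)
    (μ : Measure (BSeq N × ℝ)) [IsProbabilityMeasure μ]
    (herg : Ergodic (Fmap f) μ)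
    (χμ : ℝ) (hχ : χμ = ∫ z, Real.log |deriv (f (z.1 0)) z.2| ∂μ) (hχpos : 0 < χμ)
    (ε : ℝ) (hε : 0 < ε) (hεχ : ε < χμ)
    (H : Set (BSeq N × ℝ)) (hHinv : Fmap f '' H = H) (hHfull : μ H = 1)
    (hHexp : ∀ z ∈ H, Filter.Tendsto
      (fun n : ℕ => (n : ℝ)⁻¹ * Real.log |deriv (fw f z.1 n) z.2|)
      Filter.atTop (nhds χμ))
    (d0 : ℝ) (hd0 : 0 < d0)
    (hdens : ∀ z ∈ H, d0 ≤ Filter.liminf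
      (fun n : ℕ =>
        ((Set.Icc 1 n ∩ {k : ℕ | hypTime f z.1 z.2 (χμ - ε) k}).ncard : ℝ) / n)
      Filter.atTop)
    (d1 : ℝ) (hd1 : 0 < d1) (hd1d0 : d1 < d0)
    (N1 j : ℕ)
    (hj : (N1 : ℝ) - 1 + d1 < (j : ℝ) * d1)
    (ξ : BSeq N) (x : Fin j → ℝ)
    (hx : ∀ i, (ξ, x i) ∈ H) (hxinj : Function.Injective x) :
    ∃ s : Finset (Fin j), s.card = N1 ∧
      {n : ℕ | ∀ i ∈ s, hypTime f ξ (x i) (χμ - ε) n}.Infinite := by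
  classical
  by_contra hcon
  push_neg at hcon
  -- `hcon : ∀ s, s.card = N1 → ¬ Infinite`
  set ρ := χμ - ε with hρ
  set S : Fin j → Set ℕ := fun i => {k | hypTime f ξ (x i) ρ k} with hSdef
  rcases Nat.eq_zero_or_pos N1 with hN1 | hN1
  · refine Set.not_infinite.mpr (hcon ∅ (by simp [hN1])) ?_
    have : {n : ℕ | ∀ i ∈ (∅ : Finset (Fin j)), hypTime f ξ (x i) ρ n} = Set.univ := by
      ext n; simp
    rw [this]; exact Set.infinite_univ
  have hjpos : 0 < j := by
    by_contra hj0
    push_neg at hj0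
    interval_cases j
    have h1 : (1 : ℝ) ≤ (N1 : ℝ) := by exact_mod_cast hN1
    simp only [Nat.cast_zero, zero_mul] at hj
    linarith
  -- counting functions
  set c : Fin j → ℕ → ℕ := fun i n => ((Finset.Icc 1 n).filter (fun k => k ∈ S i)).card
    with hcdef
  have hcount : ∀ i n, ((Set.Icc 1 n ∩ S i).ncard : ℝ) = (c i n : ℝ) := by
    intro i n
    have : Set.Icc 1 n ∩ S i = ↑((Finset.Icc 1 n).filter (fun k => k ∈ S i)) := by
      ext k; simp [hSdef, Set.mem_Icc]
    rw [this, Set.ncard_coe_finset]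
  -- lower density bound
  have hbelow : ∀ i : Fin j, ∀ᶠ n : ℕ in atTop, d1 < (c i n : ℝ) / n := by
    intro i
    have hd := hdens (ξ, x i) (hx i)
    simp only [← hρ] at hd
    have hlt : d1 < Filter.liminf
        (fun n : ℕ => ((Set.Icc 1 n ∩ S i).ncard : ℝ) / n) Filter.atTop := by
      exact lt_of_lt_of_le hd1d0 hd
    have hcb : Filter.IsBoundedUnder (· ≥ ·) Filter.atTop
        (fun n : ℕ => ((Set.Icc 1 n ∩ S i).ncard : ℝ) / n) :=
      Filter.isBoundedUnder_of
        ⟨0, fun n => div_nonneg (Nat.cast_nonneg _) (Nat.cast_nonneg _)⟩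
    have := Filter.eventually_lt_of_lt_liminf hlt hcb
    filter_upwards [this] with n hn
    rwa [hcount i n] at hn
  have hall : ∀ᶠ n : ℕ in atTop, ∀ i : Fin j, d1 * n < (c i n : ℝ) := by
    rw [Filter.eventually_all]
    intro i
    filter_upwards [hbelow i, Filter.eventually_gt_atTop 0] with n hn hn0
    have hnpos : (0 : ℝ) < n := by exact_mod_cast hn0
    calc d1 * n < (c i n : ℝ) / n * n := by
          exact mul_lt_mul_of_pos_right hn hnpos
      _ = (c i n : ℝ) := by field_simp
  -- the set of times common to at least N1 indices is finite
  set T : Set ℕ := {k | N1 ≤ (Finset.univ.filter (fun i : Fin j => k ∈ S i)).card} with hTdef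
  have hTfin : T.Finite := by
    have hsub : T ⊆ ⋃ s ∈ {s : Finset (Fin j) | s.card = N1},
        {n : ℕ | ∀ i ∈ s, hypTime f ξ (x i) ρ n} := by
      intro k hk
      obtain ⟨s, hs, hscard⟩ := Finset.exists_subset_card_eq hk
      refine Set.mem_biUnion (show s ∈ {s : Finset (Fin j) | s.card = N1} from hscard) ?_
      intro i hi
      have := hs hi
      simp only [Finset.mem_filter] at this
      exact this.2
    refine Set.Finite.subset ?_ hsub
    refine Set.Finite.biUnion (Set.toFinite _) ?_
    intro s hs
    exact hcon s hs
  obtain ⟨M, hM⟩ := hTfin.bddAbove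
  -- pointwise bound on number of indices hyperbolic at time k
  have hptwise : ∀ k : ℕ,
      (Finset.univ.filter (fun i : Fin j => k ∈ S i)).card ≤ (N1 - 1) + if k ≤ M then j else 0 := by
    intro k
    by_cases hkM : k ≤ M
    · simp only [if_pos hkM]
      have h := Finset.card_filter_le (Finset.univ : Finset (Fin j)) (fun i => k ∈ S i)
      simp only [Finset.card_univ, Fintype.card_fin] at h
      omega
    · simp only [if_neg hkM]
      have hkT : k ∉ T := fun hkT => hkM (hM hkT)
      simp only [hTdef, Set.mem_setOf_eq, not_le] at hkT
      omega
  -- double counting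
  have hsum : ∀ n : ℕ, (Finset.univ : Finset (Fin j)).sum (fun i => c i n)
      ≤ n * (N1 - 1) + M * j := by
    intro n
    have hswap : (Finset.univ : Finset (Fin j)).sum (fun i => c i n)
        = (Finset.Icc 1 n).sum
            (fun k => (Finset.univ.filter (fun i : Fin j => k ∈ S i)).card) := by
      simp only [hcdef, Finset.card_filter]
      rw [Finset.sum_comm]
    rw [hswap]
    calc (Finset.Icc 1 n).sum
          (fun k => (Finset.univ.filter (fun i : Fin j => k ∈ S i)).card)
        ≤ (Finset.Icc 1 n).sum (fun k => (N1 - 1) + if k ≤ M then j else 0) :=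
          Finset.sum_le_sum fun k _ => hptwise k
      _ = (Finset.Icc 1 n).card * (N1 - 1)
            + (Finset.Icc 1 n).sum (fun k => if k ≤ M then j else 0) := by
          rw [Finset.sum_add_distrib, Finset.sum_const, smul_eq_mul]
      _ ≤ n * (N1 - 1) + M * j := by
          have h1 : (Finset.Icc 1 n).card ≤ n := by simp [Nat.card_Icc]
          have h2 : (Finset.Icc 1 n).sum (fun k => if k ≤ M then j else 0) ≤ M * j := by
            rw [← Finset.sum_filter]
            simp only [Finset.sum_const, smul_eq_mul]
            have : ((Finset.Icc 1 n).filter (fun k => k ≤ M)).card ≤ M := by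
              have : (Finset.Icc 1 n).filter (fun k => k ≤ M) ⊆ Finset.Icc 1 M := by
                intro k hk
                simp only [Finset.mem_filter, Finset.mem_Icc] at hk ⊢
                exact ⟨hk.1.1, hk.2⟩
              calc ((Finset.Icc 1 n).filter (fun k => k ≤ M)).card
                  ≤ (Finset.Icc 1 M).card := Finset.card_le_card this
                _ ≤ M := by simp [Nat.card_Icc]
            exact Nat.mul_le_mul_right j this
          exact Nat.add_le_add (Nat.mul_le_mul_right _ h1) h2
  -- derive the contradiction
  have hN1cast : ((N1 - 1 : ℕ) : ℝ) = (N1 : ℝ) - 1 := by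
    rw [Nat.cast_sub hN1, Nat.cast_one]
  have hδ : (0 : ℝ) < (j : ℝ) * d1 - ((N1 : ℝ) - 1) := by linarith
  have hfinal : ∀ᶠ n : ℕ in atTop,
      ((j : ℝ) * d1 - ((N1 : ℝ) - 1)) * n ≤ (M : ℝ) * j := by
    filter_upwards [hall] with n hn
    have hlow : (j : ℝ) * (d1 * n) < (Finset.univ : Finset (Fin j)).sum (fun i => (c i n : ℝ)) := by
      haveI : Nonempty (Fin j) := ⟨⟨0, hjpos⟩⟩
      have := Finset.sum_lt_sum_of_nonempty
        (Finset.univ_nonempty (α := Fin j)) (fun i _ => hn i)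
      simpa [Finset.sum_const, Finset.card_univ, mul_comm] using this
    have hup : ((Finset.univ : Finset (Fin j)).sum (fun i => (c i n : ℝ)))
        ≤ (n : ℝ) * ((N1 : ℝ) - 1) + (M : ℝ) * j := by
      have := hsum n
      have hcast : ((Finset.univ.sum (fun i => c i n) : ℕ) : ℝ)
          ≤ ((n * (N1 - 1) + M * j : ℕ) : ℝ) := by exact_mod_cast this
      push_cast [hN1cast] at hcast
      convert hcast using 2 <;> push_cast <;> ring
    nlinarith
  have htend : Filter.Tendsto
      (fun n : ℕ => ((j : ℝ) * d1 - ((N1 : ℝ) - 1)) * n) Filter.atTop Filter.atTop := by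
    exact (tendsto_natCast_atTop_atTop (R := ℝ)).const_mul_atTop hδ
  have := (htend.eventually_gt_atTop ((M : ℝ) * j)).and hfinal
  obtain ⟨n, hn1, hn2⟩ := this.exists
  exact absurd hn2 (not_le.mpr hn1)
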